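/- For n ≥ 1, let D_n be the determinant of the n×n tridiagonal integer matrix with all diagonal entries equal to 6 and off-diagonal entries −1 on the sub- and super-diagonal. Then, as real numbers, D_n = ((3+2√2)^{n+1} − (3−2√2)^{n+1}) / (4√2). (D_n is the number of spanning trees of the hexagonal chain PL_n^6.) -/

import Mathlib

/-- `tridiag x n` is the `n × n` tridiagonal matrix `T(x_1, …, x_n)` whose `(i,i)`-entry
is `x (i+1)` (so the diagonal reads `x 1, …, x n`), whose `(i,j)`-entry is `-1` when
`|i - j| = 1`, and whose other entries are `0`; equivalently `diag(x) - A(P_n)` for the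
path graph `P_n`. -/
def tridiag {R : Type*} [CommRing R] (x : ℕ → R) (n : ℕ) :
    Matrix (Fin n) (Fin n) R :=
  Matrix.of fun i j =>
    if (i : ℕ) = j then x ((i : ℕ) + 1)
    else if (i : ℕ) + 1 = j ∨ (j : ℕ) + 1 = i then -1 else 0

private def T (n : ℕ) : Matrix (Fin n) (Fin n) ℤ := tridiag (fun _ => (6 : ℤ)) n

private lemma T_apply (n : ℕ) (i j : Fin n) :
    T n i j = if (i : ℕ) = j then (6 : ℤ)
      else if (i : ℕ) + 1 = j ∨ (j : ℕ) + 1 = i then -1 else 0 := rfl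

private lemma T_det_zero : (T 0).det = 1 := Matrix.det_fin_zero

private lemma T_det_one : (T 1).det = 6 := by
  rw [Matrix.det_fin_one]; rfl

private lemma sub1 (n : ℕ) :
    (T (n + 2)).submatrix Fin.succ Fin.succ = T (n + 1) := by
  ext i j
  simp only [Matrix.submatrix_apply, T_apply, Fin.val_succ]
  split_ifs with h1 h2 h3 h4 h5 h6 <;> first | rfl | omega

private lemma succAbove_one_succ (n : ℕ) (j : Fin n) :
    ((Fin.succAbove (1 : Fin (n + 2)) (Fin.succ j) : Fin (n + 2)) : ℕ) = (j : ℕ) + 2 := by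
  rw [Fin.succAbove]
  rw [if_neg]
  · simp
  · simp only [not_lt, Fin.le_iff_val_le_val, Fin.val_one, Fin.coe_castSucc, Fin.val_succ]
    omega

private lemma sub2 (n : ℕ) :
    ((T (n + 2)).submatrix Fin.succ (Fin.succAbove 1)).submatrix
      (Fin.succAbove 0) Fin.succ = T n := by
  ext i j
  simp only [Matrix.submatrix_apply, Fin.succAbove_zero, T_apply, Fin.val_succ]
  rw [succAbove_one_succ]
  split_ifs with h1 h2 h3 h4 h5 h6 <;> first | rfl | omega

private lemma T_det_rec (n : ℕ) :
    (T (n + 2)).det = 6 * (T (n + 1)).det - (T n).det := by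
  rw [Matrix.det_succ_row_zero]
  rw [Fin.sum_univ_succ, Fin.sum_univ_succ]
  have hz : ∀ j : Fin n,
      ((-1 : ℤ) ^ ((j.succ.succ : Fin (n+2)) : ℕ) * T (n + 2) 0 j.succ.succ *
        ((T (n + 2)).submatrix Fin.succ (Fin.succAbove j.succ.succ)).det) = 0 := by
    intro j
    have : T (n + 2) 0 j.succ.succ = 0 := by
      rw [T_apply]
      simp only [Fin.val_zero, Fin.val_succ]
      split_ifs <;> simp_all <;> omega
    rw [this]; ring
  rw [Finset.sum_congr rfl (fun j _ => hz j), Finset.sum_const_zero, add_zero]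
  have e0 : T (n + 2) 0 0 = 6 := by rw [T_apply]; simp
  have e1 : T (n + 2) 0 ((0 : Fin (n+1)).succ) = -1 := by
    rw [T_apply]; simp
  rw [e0, e1, Fin.succAbove_zero, sub1]
  -- second minor
  have hM : ((T (n + 2)).submatrix Fin.succ (Fin.succAbove (0 : Fin (n+1)).succ)).det
      = -(T n).det := by
    rw [Matrix.det_succ_column_zero, Fin.sum_univ_succ]
    have hcol : ((Fin.succAbove (0 : Fin (n+1)).succ (0 : Fin (n+1)) : Fin (n+2)) : ℕ) = 0 := by
      simp [Fin.succAbove]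
    have hz2 : ∀ i : Fin n,
        ((-1 : ℤ) ^ ((i.succ : Fin (n+1)) : ℕ) *
          ((T (n + 2)).submatrix Fin.succ (Fin.succAbove (0 : Fin (n+1)).succ)) i.succ 0 *
          (((T (n + 2)).submatrix Fin.succ (Fin.succAbove (0 : Fin (n+1)).succ)).submatrix
            (Fin.succAbove i.succ) Fin.succ).det) = 0 := by
      intro i
      have : ((T (n + 2)).submatrix Fin.succ (Fin.succAbove (0 : Fin (n+1)).succ)) i.succ 0 = 0 := by
        simp only [Matrix.submatrix_apply]
        rw [T_apply, hcol]
        simp only [Fin.val_succ]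
        rw [if_neg (by omega), if_neg (by omega)]
      rw [this]; ring
    rw [Finset.sum_congr rfl (fun i _ => hz2 i), Finset.sum_const_zero, add_zero]
    have e2 : ((T (n + 2)).submatrix Fin.succ (Fin.succAbove (0 : Fin (n+1)).succ)) 0 0 = -1 := by
      simp only [Matrix.submatrix_apply]
      rw [T_apply, hcol]
      simp
    rw [e2]
    have h01 : (0 : Fin (n+1)).succ = (1 : Fin (n+2)) := rfl
    rw [h01, sub2]
    simp
  rw [hM]
  simp only [Fin.val_zero, Fin.val_succ, pow_zero, pow_one]
  ring

private lemma key (n : ℕ) :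
    ((T n).det : ℝ) =
      ((3 + 2 * Real.sqrt 2) ^ (n + 1) - (3 - 2 * Real.sqrt 2) ^ (n + 1)) / (4 * Real.sqrt 2) := by
  have hs : Real.sqrt 2 * Real.sqrt 2 = 2 := Real.mul_self_sqrt (by norm_num)
  have hpos : (0 : ℝ) < Real.sqrt 2 := Real.sqrt_pos.mpr (by norm_num)
  have hne : (4 : ℝ) * Real.sqrt 2 ≠ 0 := by positivity
  induction n using Nat.strong_induction_on with
  | _ n ih =>
    match n with
    | 0 =>
      rw [T_det_zero]
      rw [eq_div_iff hne]
      push_cast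
      ring
    | 1 =>
      rw [T_det_one]
      rw [eq_div_iff hne]
      push_cast
      ring
    | (m + 2) =>
      have h1 := ih (m + 1) (by omega)
      have h0 := ih m (by omega)
      have ha : (3 + 2 * Real.sqrt 2) ^ 2 = 6 * (3 + 2 * Real.sqrt 2) - 1 := by
        linear_combination 4 * hs
      have hb : (3 - 2 * Real.sqrt 2) ^ 2 = 6 * (3 - 2 * Real.sqrt 2) - 1 := by
        linear_combination 4 * hs
      have key2 : (3 + 2 * Real.sqrt 2) ^ (m + 3) - (3 - 2 * Real.sqrt 2) ^ (m + 3) =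
          6 * ((3 + 2 * Real.sqrt 2) ^ (m + 2) - (3 - 2 * Real.sqrt 2) ^ (m + 2)) -
            ((3 + 2 * Real.sqrt 2) ^ (m + 1) - (3 - 2 * Real.sqrt 2) ^ (m + 1)) := by
        linear_combination (3 + 2 * Real.sqrt 2) ^ (m + 1) * ha -
          (3 - 2 * Real.sqrt 2) ^ (m + 1) * hb
      rw [T_det_rec]
      simp only [Int.cast_sub, Int.cast_mul, Int.cast_ofNat]
      rw [h1, h0]
      rw [show m + 2 + 1 = m + 3 from rfl]
      rw [key2]
      ring

/-- For `n ≥ 1`, the determinant `D_n` of the `n × n` tridiagonal integer matrix with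
constant diagonal `6` and off-diagonal entries `-1` satisfies, as real numbers,
`D_n = ((3+2√2)^{n+1} - (3-2√2)^{n+1}) / (4√2)`. (`D_n` is the number of spanning trees
of the hexagonal chain `PL_n^6`.) -/
theorem tridiag_const_six_det (n : ℕ) (hn : 1 ≤ n) :
    ((tridiag (fun _ => (6 : ℤ)) n).det : ℝ) =
      ((3 + 2 * Real.sqrt 2) ^ (n + 1) - (3 - 2 * Real.sqrt 2) ^ (n + 1)) / (4 * Real.sqrt 2) := by
  exact key n
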